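/- Consider the nine polynomials in ℂ[x, y, z, t, v]: zt − yv, y²z − t², yz² − tv, x⁹y + y⁴ + y²v + 2v², x⁹z − 2x⁸t − yt² + yzv, z³ − v², x⁹t + y³t + 2z²v + ytv, x⁸y² + y³t + z²v, and 2x⁸yz − x⁹v + y³v − yv². Their common zero locus in ℂ⁵ ∖ {0} is the union of exactly 22 orbits of the ℂ*-action λ·(x, y, z, t, v) = (λx, λ³y, λ⁴z, λ⁵t, λ⁶v); equivalently, it determines exactly 22 points of the weighted projective space ℙ(1,3,4,5,6). -/

import Mathlib

/-- The nine polynomials (as functions of `p ∈ ℂ⁵`, in coordinates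
`x = p 0, y = p 1, z = p 2, t = p 3, v = p 4`):
`zt − yv`, `y²z − t²`, `yz² − tv`, `x⁹y + y⁴ + y²v + 2v²`,
`x⁹z − 2x⁸t − yt² + yzv`, `z³ − v²`, `x⁹t + y³t + 2z²v + ytv`,
`x⁸y² + y³t + z²v`, `2x⁸yz − x⁹v + y³v − yv²`. -/
def singEqns : Fin 9 → (Fin 5 → ℂ) → ℂ :=
  ![fun p => p 2 * p 3 - p 1 * p 4,
    fun p => p 1 ^ 2 * p 2 - p 3 ^ 2,
    fun p => p 1 * p 2 ^ 2 - p 3 * p 4,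
    fun p => p 0 ^ 9 * p 1 + p 1 ^ 4 + p 1 ^ 2 * p 4 + 2 * p 4 ^ 2,
    fun p => p 0 ^ 9 * p 2 - 2 * p 0 ^ 8 * p 3 - p 1 * p 3 ^ 2 + p 1 * p 2 * p 4,
    fun p => p 2 ^ 3 - p 4 ^ 2,
    fun p => p 0 ^ 9 * p 3 + p 1 ^ 3 * p 3 + 2 * p 2 ^ 2 * p 4 + p 1 * p 3 * p 4,
    fun p => p 0 ^ 8 * p 1 ^ 2 + p 1 ^ 3 * p 3 + p 2 ^ 2 * p 4,
    fun p => 2 * p 0 ^ 8 * p 1 * p 2 - p 0 ^ 9 * p 4 + p 1 ^ 3 * p 4 - p 1 * p 4 ^ 2]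

/-- The common zero locus of the nine polynomials in `ℂ⁵ ∖ {0}`. -/
def singLocus : Set (Fin 5 → ℂ) :=
  { p | p ≠ 0 ∧ ∀ i : Fin 9, singEqns i p = 0 }

/-- The `ℂ*`-action `λ·(x, y, z, t, v) = (λx, λ³y, λ⁴z, λ⁵t, λ⁶v)` with
weights `(1, 3, 4, 5, 6)`. -/
def wAct (l : ℂ) (p : Fin 5 → ℂ) : Fin 5 → ℂ :=
  fun i => l ^ (![1, 3, 4, 5, 6] i : ℕ) * p i

open Polynomial

/-- `q(b)`: the second coordinate as a function of the parameter `b`. -/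
noncomputable def qf (b : ℂ) : ℂ := (2 * b - 2 * b ^ 2 + 2 * b ^ 3 - b ^ 4 - b ^ 5 + 8 * b ^ 6 - 10 * b ^ 7 + 10 * b ^ 8 - 4 * b ^ 9 - 11 * b ^ 10 + 16 * b ^ 11 - 16 * b ^ 12 + 12 * b ^ 13 + 5 * b ^ 14 - 10 * b ^ 15 + 10 * b ^ 16 - 10 * b ^ 17 - 2 * b ^ 18 + 4 * b ^ 19 - 4 * b ^ 20 + 4 * b ^ 21)

/-- `P(b)`: the degree 22 polynomial (as a function) whose roots parametrise the locus. -/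
noncomputable def Pf (b : ℂ) : ℂ := (b + b ^ 4 - 2 * b ^ 5 + 4 * b ^ 6 + 6 * b ^ 9 - 12 * b ^ 10 - 4 * b ^ 13 + 17 * b ^ 14 - 12 * b ^ 18 + 4 * b ^ 22)

/-- `P` as a `Polynomial ℂ`. -/
noncomputable def PX : Polynomial ℂ :=
  4*X^22 - 12*X^18 + 17*X^14 - 4*X^13 - 12*X^10 + 6*X^9 + 4*X^6 - 2*X^5 + X^4 + X

lemma PX_eval (b : ℂ) : PX.eval b = Pf b := by
  simp [PX, Pf]; ring

lemma PX_natDegree : PX.natDegree = 22 := by unfold PX; compute_degree!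

lemma PX_ne_zero : PX ≠ 0 := fun h => by simpa [h] using PX_natDegree

lemma PX_deriv : derivative PX =
    88*X^21 - 216*X^17 + 238*X^13 - 52*X^12 - 120*X^9 + 54*X^8 + 24*X^5 - 10*X^4 + 4*X^3 + 1 := by
  unfold PX
  simp only [derivative_add, derivative_sub, derivative_mul, derivative_X_pow, derivative_X,
    derivative_ofNat, derivative_one, Polynomial.C_eq_natCast]
  push_cast
  ring

lemma PX_sep : PX.Separable := by
  rw [Polynomial.separable_def]
  set N : ℂ := (316102021805690997211894 : ℂ) with hNdef
  have hN : N ≠ 0 := by rw [hNdef]; norm_num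
  set U : ℂ[X] := (-2342013132218815314503419 + 2947320365591727407483256 * X - 5292653088959188258457159 * X ^ 2 - 921435295251788233040313 * X ^ 3 + 20539310403833742352621236 * X ^ 4 - 93177899018363473942362888 * X ^ 5 + 116309890908850837970410644 * X ^ 6 - 162914562552417909924344572 * X ^ 7 + 94191118586314512335011854 * X ^ 8 + 218889669750223435372845240 * X ^ 9 - 276249858665732883577045874 * X ^ 10 + 363286662407481821311643330 * X ^ 11 - 392191629982472861653146848 * X ^ 12 - 171052754487408451305226274 * X ^ 13 + 216833535493614391481870296 * X ^ 14 - 271363148186625628821462130 * X ^ 15 + 413188766062137026895208986 * X ^ 16 + 81567872505054809903576844 * X ^ 17 - 103946513316740967729897832 * X ^ 18 + 130630388186334871176986468 * X ^ 19 - 193922854039712600234381004 * X ^ 20) with hU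
  set V : ℂ[X] := (316102021805690997211894 + 2342013132218815314503419 * X - 2947320365591727407483256 * X ^ 2 + 4028245001736424269609583 * X ^ 3 - 2943583883347747738351004 * X ^ 4 - 547692772644621547229572 * X ^ 5 + 11938746531266839572447287 * X ^ 6 - 14970568928927644455119683 * X ^ 7 + 20710536951836856624807326 * X ^ 8 - 13319145960264244227642846 * X ^ 9 - 16889436911251330434439734 * X ^ 10 + 21338134218360003406136088 * X ^ 11 - 28073852333300802919591234 * X ^ 12 + 29892455724633010909456832 * X ^ 13 + 9797469150379429023879959 * X ^ 14 - 12433256075744645093718844 * X ^ 15 + 15573458508970624562388439 * X ^ 16 - 23589312193891664864684235 * X ^ 17 - 3707630568411582268344402 * X ^ 18 + 4724841514397316714995356 * X ^ 19 - 5937744917560675962590294 * X ^ 20 + 8814675183623300010653682 * X ^ 21) with hV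
  have key : U * PX + V * derivative PX = C N := by
    rw [hU, hV, hNdef, PX_deriv, ← map_ofNat (C : ℂ →+* ℂ[X]) 316102021805690997211894]
    unfold PX
    rw [map_ofNat (C : ℂ →+* ℂ[X]) 316102021805690997211894]
    ring
  refine ⟨C N⁻¹ * U, C N⁻¹ * V, ?_⟩
  have h2 : C N⁻¹ * U * PX + C N⁻¹ * V * derivative PX = C N⁻¹ * (U * PX + V * derivative PX) := by
    ring
  rw [h2, key, ← C_mul, inv_mul_cancel₀ hN, C_1]

lemma card_rootSet : Fintype.card (PX.rootSet ℂ) = 22 := by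
  rw [Polynomial.card_rootSet_eq_natDegree PX_sep (IsAlgClosed.splits _), PX_natDegree]

/-- The parametrised point `(1, q(b), b², b·q(b), b³)`. -/
noncomputable def pt (b : ℂ) : Fin 5 → ℂ := ![1, qf b, b ^ 2, b * qf b, b ^ 3]

lemma pt_inj : Function.Injective pt := by
  intro a b h
  have h2 : a ^ 2 = b ^ 2 := congrFun h 2
  have h3 : a ^ 3 = b ^ 3 := congrFun h 4
  by_cases ha : a = 0
  · subst ha
    have hb0 : b ^ 2 = 0 := by linear_combination -h2
    exact ((pow_eq_zero_iff two_ne_zero).mp hb0).symm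
  · have hb2 : b ^ 2 ≠ 0 := by rw [← h2]; exact pow_ne_zero _ ha
    have hhh : a * a ^ 2 = b * b ^ 2 := by linear_combination h3
    rw [h2] at hhh
    exact mul_right_cancel₀ hb2 hhh

lemma pt_mem {b : ℂ} (hb : Pf b = 0) : pt b ∈ singLocus := by
  have hP : (b + b ^ 4 - 2 * b ^ 5 + 4 * b ^ 6 + 6 * b ^ 9 - 12 * b ^ 10 - 4 * b ^ 13 + 17 * b ^ 14 - 12 * b ^ 18 + 4 * b ^ 22) = 0 := hb
  constructor
  · intro h
    have h0 : (1 : ℂ) = 0 := congrFun h 0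
    exact one_ne_zero h0
  · intro i
    fin_cases i
    · show b ^ 2 * (b * qf b) - qf b * b ^ 3 = 0
      ring
    · show (qf b) ^ 2 * b ^ 2 - (b * qf b) ^ 2 = 0
      ring
    · show qf b * (b ^ 2) ^ 2 - (b * qf b) * b ^ 3 = 0
      ring
    · show (1:ℂ) ^ 9 * qf b + (qf b) ^ 4 + (qf b) ^ 2 * b ^ 3 + 2 * (b ^ 3) ^ 2 = 0
      simp only [qf]
      linear_combination ((2 - 2 * b + 2 * b ^ 2 + 13 * b ^ 3 - 55 * b ^ 4 + 148 * b ^ 5 - 287 * b ^ 6 + 439 * b ^ 7 - 418 * b ^ 8 - 12 * b ^ 9 + 1084 * b ^ 10 - 2776 * b ^ 11 + 4511 * b ^ 12 - 4989 * b ^ 13 + 2590 * b ^ 14 + 3832 * b ^ 15 - 13554 * b ^ 16 + 22777 * b ^ 17 - 25320 * b ^ 18 + 15018 * b ^ 19 + 10260 * b ^ 20 - 44216 * b ^ 21 + 71915 * b ^ 22 - 74936 * b ^ 23 + 40376 * b ^ 24 + 27776 * b ^ 25 - 104643 * b ^ 26 + 152724 * b ^ 27 - 138704 * b ^ 28 +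 54703 * b ^ 29 + 69972 * b ^ 30 - 179832 * b ^ 31 + 218279 * b ^ 32 - 158338 * b ^ 33 + 23734 * b ^ 34 + 123424 * b ^ 35 - 213168 * b ^ 36 + 202570 * b ^ 37 - 102992 * b ^ 38 - 31816 * b ^ 39 + 136416 * b ^ 40 - 164580 * b ^ 41 + 116537 * b ^ 42 - 28584 * b ^ 43 - 52176 * b ^ 44 + 89176 * b ^ 45 - 77796 * b ^ 46 + 37232 * b ^ 47 + 6456 * b ^ 48 - 31552 * b ^ 49 + 33908 * b ^ 50 - 21440 * b ^ 51 + 4992 * b ^ 52 + 5792 * b ^ 53 - 8912 * b ^ 54 + 6848 * b ^ 55 - 2848 * b ^ 56 + 1152 * b ^ 58 - 1152 * b ^ 59 + 640 * b ^ 60 - 256 * b ^ 61 + 64 * b ^ 62)) * hP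
    · show (1:ℂ) ^ 9 * b ^ 2 - 2 * (1:ℂ) ^ 8 * (b * qf b) - qf b * (b * qf b) ^ 2 + qf b * b ^ 2 * b ^ 3 = 0
      simp only [qf]
      linear_combination (b * (-3 + 4 * b - 4 * b ^ 2 - 3 * b ^ 3 + 18 * b ^ 4 - 42 * b ^ 5 + 69 * b ^ 6 - 89 * b ^ 7 + 55 * b ^ 8 + 55 * b ^ 9 - 241 * b ^ 10 + 451 * b ^ 11 - 558 * b ^ 12 + 426 * b ^ 13 + 8 * b ^ 14 - 687 * b ^ 15 + 1345 * b ^ 16 - 1577 * b ^ 17 + 1124 * b ^ 18 + 10 * b ^ 19 - 1425 * b ^ 20 + 2391 * b ^ 21 - 2386 * b ^ 22 + 1326 * b ^ 23 + 396 * b ^ 24 - 1853 * b ^ 25 + 2388 * b ^ 26 - 1844 * b ^ 27 + 500 * b ^ 28 + 795 * b ^ 29 - 1474 * b ^ 30 + 1402 * b ^ 31 - 714 * b ^ 32 - 26 * b ^ 33 + 476 * b ^ 34 - 576 * b ^ 35 + 356 * b ^ 36 - 96 * b ^ 37 - 72 * b ^ 38 + 136 * b ^ 39 - 96 * b ^ 40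 + 48 * b ^ 41 - 16 * b ^ 42)) * hP
    · show (b ^ 2) ^ 3 - (b ^ 3) ^ 2 = 0
      ring
    · show (1:ℂ) ^ 9 * (b * qf b) + (qf b) ^ 3 * (b * qf b) + 2 * (b ^ 2) ^ 2 * b ^ 3 + qf b * (b * qf b) * b ^ 3 = 0
      simp only [qf]
      linear_combination (b * (2 - 2 * b + 2 * b ^ 2 + 13 * b ^ 3 - 55 * b ^ 4 + 148 * b ^ 5 - 287 * b ^ 6 + 439 * b ^ 7 - 418 * b ^ 8 - 12 * b ^ 9 + 1084 * b ^ 10 - 2776 * b ^ 11 + 4511 * b ^ 12 - 4989 * b ^ 13 + 2590 * b ^ 14 + 3832 * b ^ 15 - 13554 * b ^ 16 + 22777 * b ^ 17 - 25320 * b ^ 18 + 15018 * b ^ 19 + 10260 * b ^ 20 - 44216 * b ^ 21 + 71915 * b ^ 22 - 74936 * b ^ 23 + 40376 * b ^ 24 + 27776 * b ^ 25 - 104643 * b ^ 26 + 152724 * b ^ 27 - 138704 * b ^ 28 + 54703 * b ^ 29 + 69972 * b ^ 30 - 179832 * b ^ 31 + 218279 * b ^ 32 - 158338 * b ^ 33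 + 23734 * b ^ 34 + 123424 * b ^ 35 - 213168 * b ^ 36 + 202570 * b ^ 37 - 102992 * b ^ 38 - 31816 * b ^ 39 + 136416 * b ^ 40 - 164580 * b ^ 41 + 116537 * b ^ 42 - 28584 * b ^ 43 - 52176 * b ^ 44 + 89176 * b ^ 45 - 77796 * b ^ 46 + 37232 * b ^ 47 + 6456 * b ^ 48 - 31552 * b ^ 49 + 33908 * b ^ 50 - 21440 * b ^ 51 + 4992 * b ^ 52 + 5792 * b ^ 53 - 8912 * b ^ 54 + 6848 * b ^ 55 - 2848 * b ^ 56 + 1152 * b ^ 58 - 1152 * b ^ 59 + 640 * b ^ 60 - 256 * b ^ 61 + 64 * b ^ 62)) * hP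
    · show (1:ℂ) ^ 8 * (qf b) ^ 2 + (qf b) ^ 3 * (b * qf b) + (b ^ 2) ^ 2 * b ^ 3 = 0
      simp only [qf]
      linear_combination ((4 * b - 8 * b ^ 2 + 12 * b ^ 3 - 44 * b ^ 5 + 149 * b ^ 6 - 307 * b ^ 7 + 478 * b ^ 8 - 468 * b ^ 9 + 21 * b ^ 10 + 1084 * b ^ 11 - 2812 * b ^ 12 + 4573 * b ^ 13 - 5042 * b ^ 14 + 2614 * b ^ 15 + 3840 * b ^ 16 - 13590 * b ^ 17 + 22812 * b ^ 18 - 25340 * b ^ 19 + 15022 * b ^ 20 + 10272 * b ^ 21 - 44228 * b ^ 22 + 71923 * b ^ 23 - 74940 * b ^ 24 + 40376 * b ^ 25 + 27776 * b ^ 26 - 104643 * b ^ 27 + 152724 * b ^ 28 - 138704 * b ^ 29 + 54703 * b ^ 30 + 69972 * b ^ 31 - 179832 * b ^ 32 + 218279 * b ^ 33 - 158338 * b ^ 34 + 23734 * b ^ 35 + 123424 * b ^ 36 - 213168 * b ^ 37 + 202570 * b ^ 38 - 102992 * b ^ 39 - 31816 * b ^ 40 + 136416 * b ^ 41 - 164580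 * b ^ 42 + 116537 * b ^ 43 - 28584 * b ^ 44 - 52176 * b ^ 45 + 89176 * b ^ 46 - 77796 * b ^ 47 + 37232 * b ^ 48 + 6456 * b ^ 49 - 31552 * b ^ 50 + 33908 * b ^ 51 - 21440 * b ^ 52 + 4992 * b ^ 53 + 5792 * b ^ 54 - 8912 * b ^ 55 + 6848 * b ^ 56 - 2848 * b ^ 57 + 1152 * b ^ 59 - 1152 * b ^ 60 + 640 * b ^ 61 - 256 * b ^ 62 + 64 * b ^ 63)) * hP
    · show 2 * (1:ℂ) ^ 8 * qf b * b ^ 2 - (1:ℂ) ^ 9 * b ^ 3 + (qf b) ^ 3 * b ^ 3 - qf b * (b ^ 3) ^ 2 = 0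
      simp only [qf]
      linear_combination (-(b ^ 2) * (-3 + 4 * b - 4 * b ^ 2 - 3 * b ^ 3 + 18 * b ^ 4 - 42 * b ^ 5 + 69 * b ^ 6 - 89 * b ^ 7 + 55 * b ^ 8 + 55 * b ^ 9 - 241 * b ^ 10 + 451 * b ^ 11 - 558 * b ^ 12 + 426 * b ^ 13 + 8 * b ^ 14 - 687 * b ^ 15 + 1345 * b ^ 16 - 1577 * b ^ 17 + 1124 * b ^ 18 + 10 * b ^ 19 - 1425 * b ^ 20 + 2391 * b ^ 21 - 2386 * b ^ 22 + 1326 * b ^ 23 + 396 * b ^ 24 - 1853 * b ^ 25 + 2388 * b ^ 26 - 1844 * b ^ 27 + 500 * b ^ 28 + 795 * b ^ 29 - 1474 * b ^ 30 + 1402 * b ^ 31 - 714 * b ^ 32 - 26 * b ^ 33 + 476 * b ^ 34 - 576 * b ^ 35 + 356 * b ^ 36 - 96 * b ^ 37 - 72 * b ^ 38 + 136 * b ^ 39 - 96 * b ^ 40 + 48 * b ^ 41 - 16 * b ^ 42)) * hP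

lemma param {p : Fin 5 → ℂ} (hp : p ∈ singLocus) :
    ∃ b : ℂ, p 2 = b ^ 2 ∧ p 3 = b * p 1 ∧ p 4 = b ^ 3 := by
  have e0 : p 2 * p 3 - p 1 * p 4 = 0 := hp.2 0
  have e1 : p 1 ^ 2 * p 2 - p 3 ^ 2 = 0 := hp.2 1
  have e5 : p 2 ^ 3 - p 4 ^ 2 = 0 := hp.2 5
  by_cases hz : p 2 = 0
  · refine ⟨0, by simpa using hz, ?_, ?_⟩
    · have h3 : p 3 ^ 2 = 0 := by linear_combination p 1 ^ 2 * hz - e1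
      have := (pow_eq_zero_iff two_ne_zero).mp h3
      rw [this]; ring
    · have h4 : p 4 ^ 2 = 0 := by
        linear_combination p 2 ^ 2 * hz - e5
      have := (pow_eq_zero_iff two_ne_zero).mp h4
      rw [this]; ring
  · have hv : p 4 ≠ 0 := by
      intro h
      apply hz
      have h2 : p 2 ^ 3 = 0 := by rw [h] at e5; linear_combination e5
      exact (pow_eq_zero_iff three_ne_zero).mp h2
    refine ⟨p 4 / p 2, ?_, ?_, ?_⟩
    · field_simp
      linear_combination e5
    · field_simp
      linear_combination e0
    · field_simp
      linear_combination e5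

lemma x_ne {p : Fin 5 → ℂ} (hp : p ∈ singLocus) : p 0 ≠ 0 := by
  obtain ⟨b, h2, h3, h4⟩ := param hp
  intro ha
  have e3 : p 1 + p 1 ^ 4 + p 1 ^ 2 * b ^ 3 + 2 * b ^ 6 - p 1 = p 0 ^ 9 * p 1 + p 1 ^ 4 + p 1 ^ 2 * p 4 + 2 * p 4 ^ 2 := by
    rw [ha, h4]; ring
  have e3' : p 1 ^ 4 + b ^ 3 * p 1 ^ 2 + 2 * b ^ 6 = 0 := by
    have h := hp.2 3
    have : p 0 ^ 9 * p 1 + p 1 ^ 4 + p 1 ^ 2 * p 4 + 2 * p 4 ^ 2 = 0 := h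
    rw [ha, h4] at this
    linear_combination this
  have e7' : b * p 1 ^ 4 + b ^ 7 = 0 := by
    have h : p 0 ^ 8 * p 1 ^ 2 + p 1 ^ 3 * p 3 + p 2 ^ 2 * p 4 = 0 := hp.2 7
    rw [ha, h2, h3, h4] at h
    linear_combination h
  by_cases hb : b = 0
  · apply hp.1
    have hc : p 1 = 0 := by
      have h14 : p 1 ^ 4 = 0 := by rw [hb] at e3'; linear_combination e3'
      exact (pow_eq_zero_iff four_ne_zero).mp h14
    funext i
    fin_cases i
    · exact ha
    · exact hc
    · show p 2 = 0; rw [h2, hb]; ring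
    · show p 3 = 0; rw [h3, hc]; ring
    · show p 4 = 0; rw [h4, hb]; ring
  · have hA : p 1 ^ 4 + b ^ 6 = 0 := by
      have : b * (p 1 ^ 4 + b ^ 6) = 0 := by linear_combination e7'
      exact (mul_eq_zero.mp this).resolve_left hb
    have hc2 : p 1 ^ 2 + b ^ 3 = 0 := by
      have h6 : b ^ 3 * (p 1 ^ 2 + b ^ 3) = 0 := by linear_combination e3' - hA
      exact (mul_eq_zero.mp h6).resolve_left (pow_ne_zero 3 hb)
    have h26 : (2 : ℂ) * b ^ 6 = 0 := by
      linear_combination hA - (p 1 ^ 2 - b ^ 3) * hc2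
    have : b ^ 6 = 0 := by linear_combination h26 / 2
    exact hb ((pow_eq_zero_iff (by norm_num : (6:ℕ) ≠ 0)).mp this)

lemma classify {p : Fin 5 → ℂ} (hp : p ∈ singLocus) (h1 : p 0 = 1) :
    ∃ b : ℂ, Pf b = 0 ∧ p = pt b := by
  obtain ⟨b, h2, h3, h4⟩ := param hp
  have e3 : p 1 + p 1 ^ 4 + b ^ 3 * p 1 ^ 2 + 2 * b ^ 6 = 0 := by
    have h : p 0 ^ 9 * p 1 + p 1 ^ 4 + p 1 ^ 2 * p 4 + 2 * p 4 ^ 2 = 0 := hp.2 3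
    rw [h1, h4] at h
    linear_combination h
  have e7 : p 1 ^ 2 + b * p 1 ^ 4 + b ^ 7 = 0 := by
    have h : p 0 ^ 8 * p 1 ^ 2 + p 1 ^ 3 * p 3 + p 2 ^ 2 * p 4 = 0 := hp.2 7
    rw [h1, h2, h3, h4] at h
    linear_combination h
  have e4b : b * (b - 2 * p 1 - b * p 1 ^ 3 + b ^ 4 * p 1) = 0 := by
    have h : p 0 ^ 9 * p 2 - 2 * p 0 ^ 8 * p 3 - p 1 * p 3 ^ 2 + p 1 * p 2 * p 4 = 0 := hp.2 4
    rw [h1, h2, h3, h4] at h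
    linear_combination h
  by_cases hb : b = 0
  · subst hb
    have hc : p 1 = 0 := by
      have h12 : p 1 ^ 2 = 0 := by linear_combination e7
      exact (pow_eq_zero_iff two_ne_zero).mp h12
    refine ⟨0, by simp [Pf], ?_⟩
    funext i
    fin_cases i
    · exact h1
    · show p 1 = qf 0; rw [hc]; simp [qf]
    · show p 2 = (0:ℂ) ^ 2; rw [h2]
    · show p 3 = 0 * qf 0; rw [h3, hc]; ring
    · show p 4 = (0:ℂ) ^ 3; rw [h4]
  · have e4 : b - 2 * p 1 - b * p 1 ^ 3 + b ^ 4 * p 1 = 0 :=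
      (mul_eq_zero.mp e4b).resolve_left hb
    set c := p 1 with hcdef
    have hG1 : c + c ^ 4 + b ^ 3 * c ^ 2 + 2 * b ^ 6 = 0 := by linear_combination e3
    have hG2 : b - 2 * c - b * c ^ 3 + b ^ 4 * c = 0 := e4
    have hG3 : c ^ 2 + b * c ^ 4 + b ^ 7 = 0 := by linear_combination e7
    have hP : Pf b = 0 := by
      simp only [Pf]
      linear_combination ((2 + b * c ^ 2 + 4 * b * c ^ 3 + b ^ 2 * c - 4 * b ^ 2 * c ^ 3 + b ^ 3 - 4 * b ^ 3 * c + 4 * b ^ 3 * c ^ 3 - 5 * b ^ 4 + 4 * b ^ 4 * c - 8 * b ^ 4 * c ^ 3 - 4 * b ^ 5 * c - 2 * b ^ 5 * c ^ 2 - 16 * b ^ 5 * c ^ 3 + 9 * b ^ 6 * c + 16 * b ^ 6 * c ^ 3 + 8 * b ^ 7 * c + 8 * b ^ 7 * c ^ 2 - 16 * b ^ 7 * c ^ 3 + 4 * b ^ 8 - 20 * b ^ 8 * c - 8 * b ^ 8 * c ^ 2 + 32 * b ^ 8 * c ^ 3 - 4 * b ^ 9 + 20 * b ^ 9 * c + 7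 * b ^ 9 * c ^ 2 + 12 * b ^ 9 * c ^ 3 + 4 * b ^ 10 - 26 * b ^ 10 * c - 12 * b ^ 10 * c ^ 2 - 12 * b ^ 10 * c ^ 3 - 4 * b ^ 11 + 28 * b ^ 11 * c - 32 * b ^ 11 * c ^ 2 + 12 * b ^ 11 * c ^ 3 + 7 * b ^ 12 + 28 * b ^ 12 * c + 32 * b ^ 12 * c ^ 2 - 24 * b ^ 12 * c ^ 3 + 8 * b ^ 13 - 28 * b ^ 13 * c - 38 * b ^ 13 * c ^ 2 - 16 * b ^ 14 + 28 * b ^ 14 * c + 52 * b ^ 14 * c ^ 2 + 16 * b ^ 15 - 56 * b ^ 15 * c + 28 * b ^ 15 * c ^ 2 - 22 * b ^ 16 - 12 * b ^ 16 * c - 28 * b ^ 16 * c ^ 2 + 20 * b ^ 17 + 12 * b ^ 17 * c + 28 * b ^ 17 * c ^ 2 + 16 * b ^ 18 - 12 * b ^ 18 * c - 56 * b ^ 18 * c ^ 2 - 16 * b ^ 19 + 24 * b ^ 19 * c - 12 * b ^ 19 * c ^ 2 + 16 * b ^ 20 + 12 * b ^ 20 * c ^ 2 - 32 * b ^ 21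 - 12 * b ^ 21 * c ^ 2 - 12 * b ^ 22 + 24 * b ^ 22 * c ^ 2 + 12 * b ^ 23 - 12 * b ^ 24 + 24 * b ^ 25)) * hG1 + ((1 + 2 * c ^ 3 + b * c ^ 2 + b * c ^ 5 + 4 * b * c ^ 6 + b ^ 2 * c + b ^ 2 * c ^ 4 - 4 * b ^ 2 * c ^ 6 + b ^ 3 + b ^ 3 * c ^ 3 - 4 * b ^ 3 * c ^ 4 + 4 * b ^ 3 * c ^ 6 - 2 * b ^ 4 - 5 * b ^ 4 * c ^ 3 + 4 * b ^ 4 * c ^ 4 - 8 * b ^ 4 * c ^ 6 - 2 * b ^ 5 * c ^ 2 - 4 * b ^ 5 * c ^ 4 - 2 * b ^ 5 * c ^ 5 - 16 * b ^ 5 * c ^ 6 - b ^ 6 * c + 9 * b ^ 6 * c ^ 4 + 16 * b ^ 6 * c ^ 6 + 4 * b ^ 7 * c + 8 * b ^ 7 * c ^ 2 + 8 * b ^ 7 * c ^ 4 + 8 * b ^ 7 * c ^ 5 - 16 * b ^ 7 * c ^ 6 + 4 * b ^ 8 + 4 * b ^ 8 * c - 8 * b ^ 8 * c ^ 2 + 5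 * b ^ 8 * c ^ 3 - 16 * b ^ 8 * c ^ 4 - 8 * b ^ 8 * c ^ 5 + 32 * b ^ 8 * c ^ 6 - 4 * b ^ 9 - 4 * b ^ 9 * c + 8 * b ^ 9 * c ^ 2 + 16 * b ^ 9 * c ^ 4 + 7 * b ^ 9 * c ^ 5 + 12 * b ^ 9 * c ^ 6 + 4 * b ^ 10 + 4 * b ^ 10 * c - 16 * b ^ 10 * c ^ 2 - 22 * b ^ 10 * c ^ 4 - 12 * b ^ 10 * c ^ 5 - 12 * b ^ 10 * c ^ 6 - 4 * b ^ 11 - 14 * b ^ 11 * c - 28 * b ^ 11 * c ^ 2 + 20 * b ^ 11 * c ^ 4 - 32 * b ^ 11 * c ^ 5 + 12 * b ^ 11 * c ^ 6 + 7 * b ^ 12 - 8 * b ^ 12 * c + 28 * b ^ 12 * c ^ 2 - 2 * b ^ 12 * c ^ 3 + 16 * b ^ 12 * c ^ 4 + 32 * b ^ 12 * c ^ 5 - 24 * b ^ 12 * c ^ 6 + 8 * b ^ 13 + 24 * b ^ 13 * c - 28 * b ^ 13 * c ^ 2 - 16 * b ^ 13 * c ^ 4 - 38 * b ^ 13 *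 c ^ 5 - 16 * b ^ 14 - 24 * b ^ 14 * c + 56 * b ^ 14 * c ^ 2 + 16 * b ^ 14 * c ^ 4 + 52 * b ^ 14 * c ^ 5 + 16 * b ^ 15 + 31 * b ^ 15 * c + 12 * b ^ 15 * c ^ 2 - 32 * b ^ 15 * c ^ 4 + 28 * b ^ 15 * c ^ 5 - 22 * b ^ 16 - 32 * b ^ 16 * c - 12 * b ^ 16 * c ^ 2 - 12 * b ^ 16 * c ^ 4 - 28 * b ^ 16 * c ^ 5 + 20 * b ^ 17 - 48 * b ^ 17 * c + 12 * b ^ 17 * c ^ 2 + 12 * b ^ 17 * c ^ 4 + 28 * b ^ 17 * c ^ 5 + 16 * b ^ 18 + 48 * b ^ 18 * c - 24 * b ^ 18 * c ^ 2 - 12 * b ^ 18 * c ^ 4 - 56 * b ^ 18 * c ^ 5 - 16 * b ^ 19 - 54 * b ^ 19 * c + 24 * b ^ 19 * c ^ 4 - 12 * b ^ 19 * c ^ 5 + 16 * b ^ 20 + 84 * b ^ 20 * c + 12 * b ^ 20 * c ^ 5 - 32 * b ^ 21 + 40 * b ^ 21 * c - 12 * b ^ 21 * c ^ 5 - 12 *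 b ^ 22 - 40 * b ^ 22 * c + 24 * b ^ 22 * c ^ 5 + 12 * b ^ 23 + 40 * b ^ 23 * c - 12 * b ^ 24 - 80 * b ^ 24 * c + 24 * b ^ 25 - 12 * b ^ 25 * c + 12 * b ^ 26 * c - 12 * b ^ 27 * c + 24 * b ^ 28 * c)) * hG2 + ((2 * c ^ 2 - 4 * b * c ^ 2 + b * c ^ 4 + 4 * b * c ^ 5 + 4 * b ^ 2 * c ^ 2 + b ^ 2 * c ^ 3 - 4 * b ^ 2 * c ^ 5 + 2 * b ^ 3 - 3 * b ^ 3 * c ^ 2 - 4 * b ^ 3 * c ^ 3 + 4 * b ^ 3 * c ^ 5 - 4 * b ^ 4 + 2 * b ^ 4 * c ^ 2 - 8 * b ^ 4 * c ^ 5 + 4 * b ^ 5 - b ^ 5 * c + 16 * b ^ 5 * c ^ 2 - 2 * b ^ 5 * c ^ 4 - 16 * b ^ 5 * c ^ 5 - 11 * b ^ 6 + 4 * b ^ 6 * c - 16 * b ^ 6 * c ^ 2 + 5 * b ^ 6 * c ^ 3 + 16 * b ^ 6 * c ^ 5 + b ^ 7 - 4 * b ^ 7 * c + 16 * b ^ 7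 * c ^ 2 + 16 * b ^ 7 * c ^ 3 + 8 * b ^ 7 * c ^ 4 - 16 * b ^ 7 * c ^ 5 + 24 * b ^ 8 + 4 * b ^ 8 * c - 25 * b ^ 8 * c ^ 2 - 8 * b ^ 8 * c ^ 4 + 32 * b ^ 8 * c ^ 5 - 24 * b ^ 9 - 8 * b ^ 9 * c - 12 * b ^ 9 * c ^ 2 + 7 * b ^ 9 * c ^ 4 + 12 * b ^ 9 * c ^ 5 + 30 * b ^ 10 - 12 * b ^ 10 * c + 4 * b ^ 10 * c ^ 2 - 6 * b ^ 10 * c ^ 3 - 12 * b ^ 10 * c ^ 4 - 12 * b ^ 10 * c ^ 5 - 46 * b ^ 11 + 24 * b ^ 11 * c - 4 * b ^ 11 * c ^ 2 - 12 * b ^ 11 * c ^ 3 - 32 * b ^ 11 * c ^ 4 + 12 * b ^ 11 * c ^ 5 - 32 * b ^ 12 - 24 * b ^ 12 * c + 15 * b ^ 12 * c ^ 2 + 4 * b ^ 12 * c ^ 3 + 32 * b ^ 12 * c ^ 4 - 24 * b ^ 12 * c ^ 5 + 48 * b ^ 13 + 36 * b ^ 13 * c + 12 * b ^ 13 * c ^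 2 - 4 * b ^ 13 * c ^ 3 - 38 * b ^ 13 * c ^ 4 - 48 * b ^ 14 - 24 * b ^ 14 * c + 32 * b ^ 14 * c ^ 2 + 4 * b ^ 14 * c ^ 3 + 52 * b ^ 14 * c ^ 4 + 80 * b ^ 15 - 44 * b ^ 15 * c - 32 * b ^ 15 * c ^ 2 - 8 * b ^ 15 * c ^ 3 + 28 * b ^ 15 * c ^ 4 - 28 * b ^ 16 + 44 * b ^ 16 * c + 38 * b ^ 16 * c ^ 2 - 12 * b ^ 16 * c ^ 3 - 28 * b ^ 16 * c ^ 4 - 44 * b ^ 17 - 44 * b ^ 17 * c - 52 * b ^ 17 * c ^ 2 + 12 * b ^ 17 * c ^ 3 + 28 * b ^ 17 * c ^ 4 + 44 * b ^ 18 + 88 * b ^ 18 * c - 28 * b ^ 18 * c ^ 2 - 12 * b ^ 18 * c ^ 3 - 56 * b ^ 18 * c ^ 4 - 56 * b ^ 19 + 24 * b ^ 19 * c + 28 * b ^ 19 * c ^ 2 + 24 * b ^ 19 * c ^ 3 - 12 * b ^ 19 * c ^ 4 + 64 * b ^ 20 - 24 * b ^ 20 * c - 28 * b ^ 20 * c ^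 2 + 12 * b ^ 20 * c ^ 4 + 24 * b ^ 21 + 24 * b ^ 21 * c + 56 * b ^ 21 * c ^ 2 - 12 * b ^ 21 * c ^ 4 - 24 * b ^ 22 - 48 * b ^ 22 * c + 12 * b ^ 22 * c ^ 2 + 24 * b ^ 22 * c ^ 4 + 24 * b ^ 23 - 12 * b ^ 23 * c ^ 2 - 48 * b ^ 24 + 12 * b ^ 24 * c ^ 2 - 24 * b ^ 25 * c ^ 2)) * hG3
    have hc : c = qf b := by
      simp only [qf]
      linear_combination ((-3 + 2 * c + 4 * b - 2 * b * c - b * c ^ 2 - 4 * b * c ^ 3 - 4 * b ^ 2 + b ^ 2 * c + 2 * b ^ 2 * c ^ 2 + 12 * b ^ 2 * c ^ 3 + 3 * b ^ 3 + 2 * b ^ 3 * c - 2 * b ^ 3 * c ^ 2 - 20 * b ^ 3 * c ^ 3 + 2 * b ^ 4 - 10 * b ^ 4 * c + 2 * b ^ 4 * c ^ 2 + 32 * b ^ 4 * c ^ 3 - 4 * b ^ 5 + 18 * b ^ 5 * c - 24 * b ^ 5 * c ^ 3 + 4 * b ^ 6 - 31 * b ^ 6 * c - 4 * b ^ 7 +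 30 * b ^ 7 * c - 10 * b ^ 7 * c ^ 2 + 16 * b ^ 7 * c ^ 3 - 8 * b ^ 8 * c + 26 * b ^ 8 * c ^ 2 - 48 * b ^ 8 * c ^ 3 + 4 * b ^ 9 - 16 * b ^ 9 * c - 41 * b ^ 9 * c ^ 2 + 44 * b ^ 9 * c ^ 3 - 12 * b ^ 10 + 46 * b ^ 10 * c + 62 * b ^ 10 * c ^ 2 - 12 * b ^ 10 * c ^ 3 + 20 * b ^ 11 - 80 * b ^ 11 * c - 44 * b ^ 11 * c ^ 2 + 4 * b ^ 11 * c ^ 3 - 31 * b ^ 12 + 60 * b ^ 12 * c - 4 * b ^ 12 * c ^ 2 + 16 * b ^ 12 * c ^ 3 + 30 * b ^ 13 - 12 * b ^ 13 * c + 42 * b ^ 13 * c ^ 2 - 16 * b ^ 13 * c ^ 3 - 12 * b ^ 14 - 12 * b ^ 14 * c - 96 * b ^ 14 * c ^ 2 - 4 * b ^ 15 + 64 * b ^ 15 * c + 76 * b ^ 15 * c ^ 2 + 26 * b ^ 16 - 60 * b ^ 16 * c - 12 * b ^ 16 * c ^ 2 - 48 * b ^ 17 + 12 * b ^ 17 *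 c - 12 * b ^ 17 * c ^ 2 + 32 * b ^ 18 - 4 * b ^ 18 * c + 64 * b ^ 18 * c ^ 2 - 16 * b ^ 19 * c - 60 * b ^ 19 * c ^ 2 - 16 * b ^ 20 + 16 * b ^ 20 * c + 12 * b ^ 20 * c ^ 2 + 48 * b ^ 21 - 4 * b ^ 21 * c ^ 2 - 44 * b ^ 22 - 16 * b ^ 22 * c ^ 2 + 12 * b ^ 23 + 16 * b ^ 23 * c ^ 2 - 4 * b ^ 24 - 16 * b ^ 25 + 16 * b ^ 26)) * hG1 + ((-2 - 3 * c ^ 3 + 2 * c ^ 4 + 2 * b - b * c ^ 2 + 4 * b * c ^ 3 - 2 * b * c ^ 4 - b * c ^ 5 - 4 * b * c ^ 6 - 2 * b ^ 2 - b ^ 2 * c + 2 * b ^ 2 * c ^ 2 - 4 * b ^ 2 * c ^ 3 + b ^ 2 * c ^ 4 + 2 * b ^ 2 * c ^ 5 + 12 * b ^ 2 * c ^ 6 + b ^ 3 + 2 * b ^ 3 * c - 2 * b ^ 3 * c ^ 2 + 3 * b ^ 3 * c ^ 3 + 2 * b ^ 3 * c ^ 4 - 2 * b ^ 3 * c ^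 5 - 20 * b ^ 3 * c ^ 6 + b ^ 4 - 2 * b ^ 4 * c + 2 * b ^ 4 * c ^ 2 + 2 * b ^ 4 * c ^ 3 - 10 * b ^ 4 * c ^ 4 + 2 * b ^ 4 * c ^ 5 + 32 * b ^ 4 * c ^ 6 - 2 * b ^ 5 + 2 * b ^ 5 * c - 4 * b ^ 5 * c ^ 3 + 18 * b ^ 5 * c ^ 4 - 24 * b ^ 5 * c ^ 6 + 4 * b ^ 6 - b ^ 6 * c + 4 * b ^ 6 * c ^ 3 - 31 * b ^ 6 * c ^ 4 - 4 * b ^ 7 - 3 * b ^ 7 * c - 8 * b ^ 7 * c ^ 2 - 4 * b ^ 7 * c ^ 3 + 30 * b ^ 7 * c ^ 4 - 10 * b ^ 7 * c ^ 5 + 16 * b ^ 7 * c ^ 6 + 2 * b ^ 8 * c + 24 * b ^ 8 * c ^ 2 - b ^ 8 * c ^ 3 - 12 * b ^ 8 * c ^ 4 + 26 * b ^ 8 * c ^ 5 - 48 * b ^ 8 * c ^ 6 + 4 * b ^ 9 + 6 * b ^ 9 * c - 40 * b ^ 9 * c ^ 2 + 2 * b ^ 9 * c ^ 3 - 4 *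 b ^ 9 * c ^ 4 - 41 * b ^ 9 * c ^ 5 + 44 * b ^ 9 * c ^ 6 - 12 * b ^ 10 - 14 * b ^ 10 * c + 64 * b ^ 10 * c ^ 2 - 2 * b ^ 10 * c ^ 3 + 26 * b ^ 10 * c ^ 4 + 62 * b ^ 10 * c ^ 5 - 12 * b ^ 10 * c ^ 6 + 20 * b ^ 11 + 32 * b ^ 11 * c - 52 * b ^ 11 * c ^ 2 + 2 * b ^ 11 * c ^ 3 - 48 * b ^ 11 * c ^ 4 - 44 * b ^ 11 * c ^ 5 + 4 * b ^ 11 * c ^ 6 - 31 * b ^ 12 - 32 * b ^ 12 * c + 12 * b ^ 12 * c ^ 2 + 32 * b ^ 12 * c ^ 4 - 4 * b ^ 12 * c ^ 5 + 16 * b ^ 12 * c ^ 6 + 30 * b ^ 13 + 4 * b ^ 13 * c + 12 * b ^ 13 * c ^ 2 + 42 * b ^ 13 * c ^ 5 - 16 * b ^ 13 * c ^ 6 - 12 * b ^ 14 + 28 * b ^ 14 * c - 64 * b ^ 14 * c ^ 2 - 16 * b ^ 14 * c ^ 4 - 96 * b ^ 14 * c ^ 5 - 4 * b ^ 15 - 67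 * b ^ 15 * c + 60 * b ^ 15 * c ^ 2 + 48 * b ^ 15 * c ^ 4 + 76 * b ^ 15 * c ^ 5 + 26 * b ^ 16 + 110 * b ^ 16 * c - 12 * b ^ 16 * c ^ 2 - 44 * b ^ 16 * c ^ 4 - 12 * b ^ 16 * c ^ 5 - 48 * b ^ 17 - 76 * b ^ 17 * c + 4 * b ^ 17 * c ^ 2 + 12 * b ^ 17 * c ^ 4 - 12 * b ^ 17 * c ^ 5 + 32 * b ^ 18 - 4 * b ^ 18 * c + 16 * b ^ 18 * c ^ 2 - 4 * b ^ 18 * c ^ 4 + 64 * b ^ 18 * c ^ 5 + 58 * b ^ 19 * c - 16 * b ^ 19 * c ^ 2 - 16 * b ^ 19 * c ^ 4 - 60 * b ^ 19 * c ^ 5 - 16 * b ^ 20 - 144 * b ^ 20 * c + 16 * b ^ 20 * c ^ 4 + 12 * b ^ 20 * c ^ 5 + 48 * b ^ 21 + 120 * b ^ 21 * c - 4 * b ^ 21 * c ^ 5 - 44 * b ^ 22 - 24 * b ^ 22 * c - 16 * b ^ 22 * c ^ 5 + 12 * b ^ 23 - 8 * b ^ 23 * c + 16 * b ^ 23 *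 c ^ 5 - 4 * b ^ 24 + 80 * b ^ 24 * c - 16 * b ^ 25 - 76 * b ^ 25 * c + 16 * b ^ 26 + 12 * b ^ 26 * c - 4 * b ^ 27 * c - 16 * b ^ 28 * c + 16 * b ^ 29 * c)) * hG2 + ((-2 - 3 * c ^ 2 + 2 * c ^ 3 + 2 * b + 8 * b * c ^ 2 - 2 * b * c ^ 3 - b * c ^ 4 - 4 * b * c ^ 5 - 2 * b ^ 2 - 16 * b ^ 2 * c ^ 2 + b ^ 2 * c ^ 3 + 2 * b ^ 2 * c ^ 4 + 12 * b ^ 2 * c ^ 5 + 3 * b ^ 3 - 2 * b ^ 3 * c + 23 * b ^ 3 * c ^ 2 + 2 * b ^ 3 * c ^ 3 - 2 * b ^ 3 * c ^ 4 - 20 * b ^ 3 * c ^ 5 + 4 * b ^ 4 + 2 * b ^ 4 * c - 29 * b ^ 4 * c ^ 2 - 6 * b ^ 4 * c ^ 3 + 2 * b ^ 4 * c ^ 4 + 32 * b ^ 4 * c ^ 5 - 12 * b ^ 5 - b ^ 5 * c + 18 * b ^ 5 * c ^ 2 + 6 * b ^ 5 * c ^ 3 - 24 * b ^ 5 * c ^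 5 + 27 * b ^ 6 - 2 * b ^ 6 * c + 6 * b ^ 6 * c ^ 2 - 11 * b ^ 6 * c ^ 3 - 35 * b ^ 7 + 12 * b ^ 7 * c - 22 * b ^ 7 * c ^ 2 - 2 * b ^ 7 * c ^ 3 - 10 * b ^ 7 * c ^ 4 + 16 * b ^ 7 * c ^ 5 + 14 * b ^ 8 - 20 * b ^ 8 * c + 47 * b ^ 8 * c ^ 2 + 12 * b ^ 8 * c ^ 3 + 26 * b ^ 8 * c ^ 4 - 48 * b ^ 8 * c ^ 5 + 18 * b ^ 9 + 32 * b ^ 9 * c - 42 * b ^ 9 * c ^ 2 - 4 * b ^ 9 * c ^ 3 - 41 * b ^ 9 * c ^ 4 + 44 * b ^ 9 * c ^ 5 - 56 * b ^ 10 - 28 * b ^ 10 * c + 20 * b ^ 10 * c ^ 2 + 10 * b ^ 10 * c ^ 3 + 62 * b ^ 10 * c ^ 4 - 12 * b ^ 10 * c ^ 5 + 112 * b ^ 11 - 28 * b ^ 11 * c ^ 2 - 44 * b ^ 11 * c ^ 4 + 4 * b ^ 11 * c ^ 5 - 96 * b ^ 12 + 32 * b ^ 12 * c + 25 * b ^ 12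 * c ^ 2 - 12 * b ^ 12 * c ^ 3 - 4 * b ^ 12 * c ^ 4 + 16 * b ^ 12 * c ^ 5 + 28 * b ^ 13 - 76 * b ^ 13 * c - 46 * b ^ 13 * c ^ 2 + 12 * b ^ 13 * c ^ 3 + 42 * b ^ 13 * c ^ 4 - 16 * b ^ 13 * c ^ 5 + 20 * b ^ 14 + 112 * b ^ 14 * c + 44 * b ^ 14 * c ^ 2 - 20 * b ^ 14 * c ^ 3 - 96 * b ^ 14 * c ^ 4 - 100 * b ^ 15 - 76 * b ^ 15 * c + 4 * b ^ 15 * c ^ 2 + 32 * b ^ 15 * c ^ 3 + 76 * b ^ 15 * c ^ 4 + 140 * b ^ 16 + 12 * b ^ 16 * c - 42 * b ^ 16 * c ^ 2 - 28 * b ^ 16 * c ^ 3 - 12 * b ^ 16 * c ^ 4 - 76 * b ^ 17 + 28 * b ^ 17 * c + 96 * b ^ 17 * c ^ 2 + 12 * b ^ 17 * c ^ 3 - 12 * b ^ 17 * c ^ 4 + 4 * b ^ 18 - 112 * b ^ 18 * c - 76 * b ^ 18 * c ^ 2 - 4 * b ^ 18 * c ^ 3 + 64 * b ^ 18 * c ^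 4 + 48 * b ^ 19 + 104 * b ^ 19 * c + 12 * b ^ 19 * c ^ 2 - 16 * b ^ 19 * c ^ 3 - 60 * b ^ 19 * c ^ 4 - 112 * b ^ 20 - 24 * b ^ 20 * c + 12 * b ^ 20 * c ^ 2 + 16 * b ^ 20 * c ^ 3 + 12 * b ^ 20 * c ^ 4 + 88 * b ^ 21 + 8 * b ^ 21 * c - 64 * b ^ 21 * c ^ 2 - 4 * b ^ 21 * c ^ 4 - 24 * b ^ 22 + 32 * b ^ 22 * c + 60 * b ^ 22 * c ^ 2 - 16 * b ^ 22 * c ^ 4 + 8 * b ^ 23 - 32 * b ^ 23 * c - 12 * b ^ 23 * c ^ 2 + 16 * b ^ 23 * c ^ 4 + 32 * b ^ 24 + 4 * b ^ 24 * c ^ 2 - 32 * b ^ 25 + 16 * b ^ 25 * c ^ 2 - 16 * b ^ 26 * c ^ 2)) * hG3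
    refine ⟨b, hP, ?_⟩
    funext i
    fin_cases i
    · exact h1
    · exact hc
    · exact h2
    · show p 3 = b * qf b; rw [h3, ← hc]
    · exact h4

lemma wAct_one (p : Fin 5 → ℂ) : wAct 1 p = p := by
  funext i; simp [wAct]

lemma wAct_mul (a b : ℂ) (p : Fin 5 → ℂ) : wAct a (wAct b p) = wAct (a * b) p := by
  funext i; simp [wAct, mul_pow]; ring

lemma locus_invariant : ∀ p ∈ singLocus, ∀ l : ℂ, l ≠ 0 → wAct l p ∈ singLocus := by
  intro p hp l hl
  constructor
  · intro h
    apply hp.1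
    funext i
    have hi : l ^ (![1, 3, 4, 5, 6] i : ℕ) * p i = 0 := congrFun h i
    have : p i = 0 := (mul_eq_zero.mp hi).resolve_left (pow_ne_zero _ hl)
    simpa using this
  · have e0 : p 2 * p 3 - p 1 * p 4 = 0 := hp.2 0
    have e1 : p 1 ^ 2 * p 2 - p 3 ^ 2 = 0 := hp.2 1
    have e2 : p 1 * p 2 ^ 2 - p 3 * p 4 = 0 := hp.2 2
    have e3 : p 0 ^ 9 * p 1 + p 1 ^ 4 + p 1 ^ 2 * p 4 + 2 * p 4 ^ 2 = 0 := hp.2 3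
    have e4 : p 0 ^ 9 * p 2 - 2 * p 0 ^ 8 * p 3 - p 1 * p 3 ^ 2 + p 1 * p 2 * p 4 = 0 := hp.2 4
    have e5 : p 2 ^ 3 - p 4 ^ 2 = 0 := hp.2 5
    have e6 : p 0 ^ 9 * p 3 + p 1 ^ 3 * p 3 + 2 * p 2 ^ 2 * p 4 + p 1 * p 3 * p 4 = 0 := hp.2 6
    have e7 : p 0 ^ 8 * p 1 ^ 2 + p 1 ^ 3 * p 3 + p 2 ^ 2 * p 4 = 0 := hp.2 7
    have e8 : 2 * p 0 ^ 8 * p 1 * p 2 - p 0 ^ 9 * p 4 + p 1 ^ 3 * p 4 - p 1 * p 4 ^ 2 = 0 := hp.2 8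
    have c0 : wAct l p 0 = l * p 0 := by show l ^ (1:ℕ) * p 0 = l * p 0; ring
    have c1 : wAct l p 1 = l ^ 3 * p 1 := rfl
    have c2 : wAct l p 2 = l ^ 4 * p 2 := rfl
    have c3 : wAct l p 3 = l ^ 5 * p 3 := rfl
    have c4 : wAct l p 4 = l ^ 6 * p 4 := rfl
    intro i
    fin_cases i
    · show wAct l p 2 * wAct l p 3 - wAct l p 1 * wAct l p 4 = 0
      rw [c1, c2, c3, c4]; linear_combination l ^ 9 * e0
    · show wAct l p 1 ^ 2 * wAct l p 2 - wAct l p 3 ^ 2 = 0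
      rw [c1, c2, c3]; linear_combination l ^ 10 * e1
    · show wAct l p 1 * wAct l p 2 ^ 2 - wAct l p 3 * wAct l p 4 = 0
      rw [c1, c2, c3, c4]; linear_combination l ^ 11 * e2
    · show wAct l p 0 ^ 9 * wAct l p 1 + wAct l p 1 ^ 4 + wAct l p 1 ^ 2 * wAct l p 4 + 2 * wAct l p 4 ^ 2 = 0
      rw [c0, c1, c4]; linear_combination l ^ 12 * e3
    · show wAct l p 0 ^ 9 * wAct l p 2 - 2 * wAct l p 0 ^ 8 * wAct l p 3 - wAct l p 1 * wAct l p 3 ^ 2 + wAct l p 1 * wAct l p 2 * wAct l p 4 = 0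
      rw [c0, c1, c2, c3, c4]; linear_combination l ^ 13 * e4
    · show wAct l p 2 ^ 3 - wAct l p 4 ^ 2 = 0
      rw [c2, c4]; linear_combination l ^ 12 * e5
    · show wAct l p 0 ^ 9 * wAct l p 3 + wAct l p 1 ^ 3 * wAct l p 3 + 2 * wAct l p 2 ^ 2 * wAct l p 4 + wAct l p 1 * wAct l p 3 * wAct l p 4 = 0
      rw [c0, c1, c2, c3, c4]; linear_combination l ^ 14 * e6
    · show wAct l p 0 ^ 8 * wAct l p 1 ^ 2 + wAct l p 1 ^ 3 * wAct l p 3 + wAct l p 2 ^ 2 * wAct l p 4 = 0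
      rw [c0, c1, c2, c3, c4]; linear_combination l ^ 14 * e7
    · show 2 * wAct l p 0 ^ 8 * wAct l p 1 * wAct l p 2 - wAct l p 0 ^ 9 * wAct l p 4 + wAct l p 1 ^ 3 * wAct l p 4 - wAct l p 1 * wAct l p 4 ^ 2 = 0
      rw [c0, c1, c2, c4]; linear_combination l ^ 15 * e8

/-- The common zero locus in `ℂ⁵ ∖ {0}` of the nine polynomials is the union of
exactly 22 orbits of the weighted `ℂ*`-action with weights `(1,3,4,5,6)`:
it is invariant under the action, and the quotient of it by the orbit relation
has exactly 22 elements; equivalently, it determines exactly 22 points of the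
weighted projective space `ℙ(1,3,4,5,6)`. -/
theorem singular_locus_is_22_points :
    (∀ p ∈ singLocus, ∀ l : ℂ, l ≠ 0 → wAct l p ∈ singLocus) ∧
    Nat.card (Quot fun p q : singLocus =>
      ∃ l : ℂ, l ≠ 0 ∧ (q : Fin 5 → ℂ) = wAct l (p : Fin 5 → ℂ)) = 22 := by
  refine ⟨locus_invariant, ?_⟩
  set r : singLocus → singLocus → Prop := fun p q =>
    ∃ l : ℂ, l ≠ 0 ∧ (q : Fin 5 → ℂ) = wAct l (p : Fin 5 → ℂ) with hr
  have hequiv : Equivalence r := by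
    constructor
    · intro p; exact ⟨1, one_ne_zero, (wAct_one _).symm⟩
    · rintro p q ⟨l, hl, h⟩
      refine ⟨l⁻¹, inv_ne_zero hl, ?_⟩
      rw [h, wAct_mul, inv_mul_cancel₀ hl, wAct_one]
    · rintro p q s ⟨l, hl, h⟩ ⟨m, hm, h'⟩
      exact ⟨m * l, mul_ne_zero hm hl, by rw [h', h, wAct_mul]⟩
  have hroot : ∀ b : ℂ, b ∈ PX.rootSet ℂ → Pf b = 0 := by
    intro b hb
    have := (Polynomial.mem_rootSet.mp hb).2
    rwa [Polynomial.coe_aeval_eq_eval, PX_eval] at this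
  let f : PX.rootSet ℂ → Quot r := fun b =>
    Quot.mk r ⟨pt b.1, pt_mem (hroot b.1 b.2)⟩
  have hf : Function.Bijective f := by
    constructor
    · intro b b' h
      have hrel : r ⟨pt b.1, pt_mem (hroot b.1 b.2)⟩ ⟨pt b'.1, pt_mem (hroot b'.1 b'.2)⟩ := by
        have := Quot.eq.mp h
        exact (Equivalence.eqvGen_iff hequiv).mp this
      obtain ⟨l, hl, hw⟩ := hrel
      have h0 : (1 : ℂ) = l ^ (1:ℕ) * 1 := congrFun hw 0
      have hl1 : l = 1 := by rw [pow_one, mul_one] at h0; exact h0.symm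
      rw [hl1, wAct_one] at hw
      exact Subtype.ext (pt_inj hw).symm
    · intro x
      obtain ⟨⟨p, hp⟩, rfl⟩ := Quot.exists_rep x
      have hx := x_ne hp
      have hmem := locus_invariant p hp (p 0)⁻¹ (inv_ne_zero hx)
      have h1 : wAct (p 0)⁻¹ p 0 = 1 := by
        show (p 0)⁻¹ ^ (1:ℕ) * p 0 = 1
        rw [pow_one]; exact inv_mul_cancel₀ hx
      obtain ⟨b, hPb, hpt⟩ := classify hmem h1
      have hbmem : b ∈ PX.rootSet ℂ := by
        rw [Polynomial.mem_rootSet]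
        exact ⟨PX_ne_zero, by rw [Polynomial.coe_aeval_eq_eval, PX_eval]; exact hPb⟩
      refine ⟨⟨b, hbmem⟩, ?_⟩
      apply Quot.sound
      show ∃ l : ℂ, l ≠ 0 ∧ p = wAct l (pt b)
      refine ⟨p 0, hx, ?_⟩
      rw [← hpt, wAct_mul, mul_inv_cancel₀ hx, wAct_one]
  rw [← Nat.card_eq_of_bijective f hf, Nat.card_eq_fintype_card, card_rootSet]
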